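/- For all positive integers n, a(n) ≥ a(n-1), i.e., the sequence a is monotone nondecreasing. -/
import Mathlib


theorem stmt_11
    (i a : ℕ → ℚ)
    (ha0 : a 0 = 0) (hi1 : i 1 = 1) (ha1 : a 1 = 0)
    (ha : ∀ n : ℕ, 2 ≤ n → a n = (i (n - 1) + a (n - 1)) / 2)
    (hi23 : ∀ n : ℕ, 2 ≤ n → n ≤ 3 → i n = i (n - 1))
    (hi4 : i 4 = (i 1 + a 1 + i 2 + a 2) / 2)
    (hi5 : ∀ n : ℕ, 5 ≤ n → i n = (i 2 + a 2 + i (n - 3) + a (n - 3)) / 2) :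
    ∀ n : ℕ, 1 ≤ n → a n ≥ a (n - 1) := by
  have ha2 : a 2 = 1/2 := by rw [ha 2 (by norm_num)]; norm_num [hi1, ha1]
  have hi2 : i 2 = 1 := by rw [hi23 2 (by norm_num) (by norm_num)]; norm_num [hi1]
  have hi3 : i 3 = 1 := by rw [hi23 3 (by norm_num) (by norm_num)]; norm_num [hi2]
  have ha3 : a 3 = 3/4 := by rw [ha 3 (by norm_num)]; norm_num [hi2, ha2]
  have hi4' : i 4 = 5/4 := by rw [hi4]; norm_num [hi1, ha1, hi2, ha2]
  have ha4 : a 4 = 7/8 := by rw [ha 4 (by norm_num)]; norm_num [hi3, ha3]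
  have hi5' : i 5 = 3/2 := by rw [hi5 5 (by norm_num)]; norm_num [hi2, ha2]
  have ha5 : a 5 = 17/16 := by rw [ha 5 (by norm_num)]; norm_num [hi4', ha4]
  have hi6 : i 6 = 13/8 := by rw [hi5 6 (by norm_num)]; norm_num [hi2, ha2, hi3, ha3]
  have ha6 : a 6 = 41/32 := by rw [ha 6 (by norm_num)]; norm_num [hi5', ha5]
  -- the invariant: 1/4 ≤ i n - a n ≤ 1/2 for n ≥ 2
  have D : ∀ n : ℕ, 1/4 ≤ i (n+2) - a (n+2) ∧ i (n+2) - a (n+2) ≤ 1/2 := by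
    intro n
    induction n using Nat.strong_induction_on with
    | _ n IH =>
      match n, IH with
      | 0, _ => rw [hi2, ha2]; norm_num
      | 1, _ => rw [hi3, ha3]; norm_num
      | 2, _ => rw [hi4', ha4]; norm_num
      | 3, _ => rw [hi5', ha5]; norm_num
      | 4, _ => rw [hi6, ha6]; norm_num
      | (m+5), IH =>
        obtain ⟨h5a, h5b⟩ := IH (m+3) (by omega)
        obtain ⟨h6a, h6b⟩ := IH (m+4) (by omega)
        have e1 : i (m+7) = (i 2 + a 2 + i (m+4) + a (m+4)) / 2 := by
          have := hi5 (m+7) (by omega)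
          simpa using this
        have e2 : a (m+7) = (i (m+6) + a (m+6)) / 2 := by
          have := ha (m+7) (by omega); simpa using this
        have e3 : a (m+6) = (i (m+5) + a (m+5)) / 2 := by
          have := ha (m+6) (by omega); simpa using this
        have e4 : a (m+5) = (i (m+4) + a (m+4)) / 2 := by
          have := ha (m+5) (by omega); simpa using this
        rw [hi2, ha2] at e1
        constructor <;>
          (show _ ≤ _;
           have : m + 5 + 2 = m + 7 := by ring
           rw [this]) <;> linarith [e1, e2, e3, e4]
  intro n hn
  match n with
  | 1 => rw [ha1, ha0]
  | 2 => rw [ha2, ha1]; norm_num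
  | (m+3) =>
    have e : a (m+3) = (i (m+2) + a (m+2)) / 2 := by
      have := ha (m+3) (by omega); simpa using this
    obtain ⟨hda, _⟩ := D m
    show a (m+3) ≥ a (m+3-1)
    have : m + 3 - 1 = m + 2 := by omega
    rw [this]
    linarith
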